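/- Let v be an archimedean absolute value (the usual absolute value on a subfield of ℂ), and let φ(z) = a_d(z - α_1)···(z - α_d) with d ≥ 2 and a_d ≠ 0. Set A = max_i |α_i|, B = |a_d|^{-1/d}, and c = max{1, A + B}. Then for all x with |x| > c, one has |φ(x)| ≥ (|x|/c)^d. -/

import Mathlib

open Real Finset

/-- archimedean growth estimate outside the disk of radius `c`. -/
theorem stmt_2 (d : ℕ) (hd : 2 ≤ d) (a : ℂ) (ha : a ≠ 0) (α : Fin d → ℂ)
    (φ : ℂ → ℂ) (hφ : ∀ z : ℂ, φ z = a * ∏ i : Fin d, (z - α i))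
    (A B c : ℝ)
    (hA : A = (Finset.univ : Finset (Fin d)).sup'
      (Finset.univ_nonempty_iff.mpr ⟨⟨0, by omega⟩⟩) (fun i => ‖α i‖))
    (hB : B = ‖a‖ ^ (-(1 : ℝ) / d))
    (hc : c = max 1 (A + B))
    (x : ℂ) (hx : c < ‖x‖) :
    (‖x‖ / c) ^ d ≤ ‖φ x‖ := by
  set r := ‖x‖ with hr
  have ha0 : 0 < ‖a‖ := norm_pos_iff.mpr ha
  have hB0 : 0 < B := by rw [hB]; exact Real.rpow_pos_of_pos ha0 _
  have hAle : ∀ i : Fin d, ‖α i‖ ≤ A := by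
    intro i; rw [hA]
    exact Finset.le_sup' (fun i => ‖α i‖) (Finset.mem_univ i)
  have hA0 : 0 ≤ A := le_trans (norm_nonneg (α ⟨0, by omega⟩)) (hAle _)
  have hc1 : (1 : ℝ) ≤ c := by rw [hc]; exact le_max_left _ _
  have hcAB : A + B ≤ c := by rw [hc]; exact le_max_right _ _
  have hc0 : 0 < c := lt_of_lt_of_le one_pos hc1
  have hrA : B ≤ r - A := by nlinarith
  have hrA0 : 0 < r - A := lt_of_lt_of_le hB0 hrA
  -- each factor bound
  have hfac : ∀ i : Fin d, r - A ≤ ‖x - α i‖ := by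
    intro i
    have h1 : r - ‖α i‖ ≤ ‖x - α i‖ := by
      exact norm_sub_norm_le x (α i)
    have := hAle i
    linarith
  have hBd : B ^ d = ‖a‖⁻¹ := by
    have hdne : (d : ℝ) ≠ 0 := by positivity
    rw [hB, ← Real.rpow_natCast (‖a‖ ^ (-(1 : ℝ) / d)) d,
      ← Real.rpow_mul ha0.le]
    have : -(1 : ℝ) / d * d = -1 := by field_simp
    rw [this, Real.rpow_neg_one]
  have hφx : ‖φ x‖ = ‖a‖ * ∏ i : Fin d, ‖x - α i‖ := by
    rw [hφ, norm_mul, norm_prod]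
  have hprod : (r - A) ^ d ≤ ∏ i : Fin d, ‖x - α i‖ := by
    calc (r - A) ^ d = ∏ _i : Fin d, (r - A) := by
          rw [Finset.prod_const, Finset.card_univ, Fintype.card_fin]
      _ ≤ ∏ i : Fin d, ‖x - α i‖ :=
          Finset.prod_le_prod (fun i _ => hrA0.le) (fun i _ => hfac i)
  have hratio : r / c ≤ (r - A) / B := by
    rw [div_le_div_iff₀ hc0 hB0]
    nlinarith [mul_nonneg (sub_nonneg.mpr hx.le) (by linarith : (0:ℝ) ≤ c - B),
      mul_nonneg hc0.le (by linarith : (0:ℝ) ≤ c - A - B)]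
  calc (r / c) ^ d ≤ ((r - A) / B) ^ d :=
        pow_le_pow_left₀ (by positivity) hratio d
    _ = ‖a‖ * (r - A) ^ d := by
        rw [div_pow, hBd]; field_simp
    _ ≤ ‖a‖ * ∏ i : Fin d, ‖x - α i‖ :=
        mul_le_mul_of_nonneg_left hprod ha0.le
    _ = ‖φ x‖ := hφx.symm
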